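/- Under Assumption (Lip), and assuming L_p < |𝒳|c_min and 0 < φ < φ_max, the map G : Δ(𝒳) → Δ(𝒳), G(μ) = P^{softmin_φ Q*_μ, μ}μ, satisfies ‖G(μ) − G(μ')‖₁ ≤ k‖μ − μ'‖₁ for all μ, μ' ∈ Δ(𝒳), where k = φ|𝒜|·(L_f + (γ/(1−γ))L_p‖f‖∞)/(1−γ) + L_p + 1 − |𝒳|c_min < 1; consequently G has a unique fixed point μ*φ ∈ Δ(𝒳). -/

import Mathlib

open Finset Filter
open scoped Classical

noncomputable section

variable {X A : Type*}

/-- A probability vector on a finite set. -/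
def IsProb [Fintype X] (μ : X → ℝ) : Prop := (∀ x, 0 ≤ μ x) ∧ ∑ x, μ x = 1

/-- ℓ¹ norm of a signed measure / vector on a finite set. -/
def l1 [Fintype X] (μ : X → ℝ) : ℝ := ∑ x, |μ x|

/-- Sup norm of a Q-table. -/
def supQ [Fintype X] [Fintype A] [Nonempty X] [Nonempty A] (Q : X → A → ℝ) : ℝ :=
  Finset.univ.sup' Finset.univ_nonempty (fun xa : X × A => |Q xa.1 xa.2|)

/-- Minimum of a row of a Q-table (minimum over actions). -/
def minRow [Fintype A] [Nonempty A] (q : A → ℝ) : ℝ :=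
  Finset.univ.inf' Finset.univ_nonempty q

/-- The soft-min distribution over actions with parameter φ. -/
def softmin [Fintype A] (φ : ℝ) (z : A → ℝ) (a : A) : ℝ :=
  Real.exp (-φ * z a) / ∑ a', Real.exp (-φ * z a')

/-- The argmin_e policy: uniform over the minimizers, zero elsewhere. -/
def argminE [Fintype A] [Nonempty A] (q : A → ℝ) (a : A) : ℝ :=
  if q a = minRow q then (1 : ℝ) / (Finset.univ.filter fun a' => q a' = minRow q).card else 0

/-- (P^{π,μ} ν)(x) = ∑_{x'} ν(x') ∑_a π(a|x') p(x|x',a,μ). -/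
def Ppush [Fintype X] [Fintype A] (p : X → A → (X → ℝ) → X → ℝ)
    (π : X → A → ℝ) (μ ν : X → ℝ) (x : X) : ℝ :=
  ∑ x', ν x' * ∑ a, π x' a * p x' a μ x

/-- P₂(Q,μ) = P^{softmin_φ Q, μ} μ − μ. -/
def P2 [Fintype X] [Fintype A] (φ : ℝ) (p : X → A → (X → ℝ) → X → ℝ)
    (Q : X → A → ℝ) (μ : X → ℝ) (x : X) : ℝ :=
  Ppush p (fun x' => softmin φ (Q x')) μ μ x - μ x

/-- The Bellman operator (B_μ Q)(x,a) = f(x,a,μ) + γ ∑_{x'} p(x'|x,a,μ) min_{a'} Q(x',a'). -/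
def bell [Fintype X] [Fintype A] [Nonempty A]
    (f : X → A → (X → ℝ) → ℝ) (p : X → A → (X → ℝ) → X → ℝ) (γ : ℝ)
    (μ : X → ℝ) (Q : X → A → ℝ) (x : X) (a : A) : ℝ :=
  f x a μ + γ * ∑ x', p x a μ x' * minRow (Q x')

/-- T₂(Q,μ) = B_μ Q − Q. -/
def T2 [Fintype X] [Fintype A] [Nonempty A]
    (f : X → A → (X → ℝ) → ℝ) (p : X → A → (X → ℝ) → X → ℝ) (γ : ℝ)
    (Q : X → A → ℝ) (μ : X → ℝ) (x : X) (a : A) : ℝ :=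
  bell f p γ μ Q x a - Q x a

section Softmin
variable [Fintype A] [Nonempty A]

lemma softmin_sum_pos (φ : ℝ) (z : A → ℝ) : 0 < ∑ a, Real.exp (-φ * z a) :=
  Finset.sum_pos (fun a _ => Real.exp_pos _) Finset.univ_nonempty

lemma softmin_nonneg (φ : ℝ) (z : A → ℝ) (a : A) : 0 ≤ softmin φ z a :=
  div_nonneg (Real.exp_pos _).le (softmin_sum_pos φ z).le

lemma softmin_sum_one (φ : ℝ) (z : A → ℝ) : ∑ a, softmin φ z a = 1 := by
  unfold softmin
  rw [← Finset.sum_div, div_self (softmin_sum_pos φ z).ne']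

lemma softmin_l1_lipschitz (φ : ℝ) (hφ : 0 ≤ φ) (z z' : A → ℝ) (δ : ℝ) (hδ : 0 ≤ δ)
    (hzz : ∀ a, |z a - z' a| ≤ δ) :
    ∑ a, |softmin φ z a - softmin φ z' a| ≤ 2 * φ * δ := by
  set h : A → ℝ := fun b => z' b - z b with hh
  have hhb : ∀ b, |h b| ≤ δ := by
    intro b; rw [hh]; simpa [abs_sub_comm] using hzz b
  set s : A → ℝ := fun a => if 0 ≤ softmin φ z' a - softmin φ z a then 1 else -1 with hs
  have hs1 : ∀ a, |s a| = 1 := by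
    intro a
    show |if 0 ≤ softmin φ z' a - softmin φ z a then (1:ℝ) else -1| = 1
    split_ifs <;> simp
  set w : ℝ → A → ℝ := fun t b => z b + t * h b with hw
  set F : ℝ → ℝ := fun t => ∑ a, s a * softmin φ (w t) a with hF
  -- goal equals F 1 - F 0
  have hw0 : w 0 = z := by funext b; simp [hw]
  have hw1 : w 1 = z' := by funext b; simp [hw, hh]
  have key : ∑ a, |softmin φ z a - softmin φ z' a| = F 1 - F 0 := by
    rw [hF]; simp only [hw0, hw1, ← Finset.sum_sub_distrib]
    refine Finset.sum_congr rfl fun a _ => ?_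
    rw [← mul_sub]
    by_cases hc : 0 ≤ softmin φ z' a - softmin φ z a
    · simp only [hs, if_pos hc]
      rw [one_mul, abs_sub_comm, abs_of_nonneg hc]
    · simp only [hs, if_neg hc]
      rw [abs_sub_comm, abs_of_neg (lt_of_not_ge hc)]; ring
  rw [key]
  -- derivative setup
  set N : ℝ → A → ℝ := fun t b => Real.exp (-φ * w t b) with hN
  set S : ℝ → ℝ := fun t => ∑ b, N t b with hS
  have hSpos : ∀ t, 0 < S t := fun t => softmin_sum_pos φ (w t)
  set F' : ℝ → ℝ := fun t => ∑ a, s a *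
      ((N t a * (-φ * h a) * S t - N t a * (∑ b, N t b * (-φ * h b))) / (S t)^2) with hF'
  have hderiv : ∀ t : ℝ, HasDerivAt F (F' t) t := by
    intro t
    have hNd : ∀ b, HasDerivAt (fun t => N t b) (N t b * (-φ * h b)) t := by
      intro b
      have l1 : HasDerivAt (fun t : ℝ => -φ * w t b) (-φ * h b) t := by
        have : HasDerivAt (fun t : ℝ => w t b) (h b) t := by
          simpa [hw] using ((hasDerivAt_mul_const (h b)).const_add (z b))
        simpa using this.const_mul (-φ)
      simpa [hN] using l1.exp
    have hSd : HasDerivAt S (∑ b, N t b * (-φ * h b)) t := by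
      rw [hS]
      exact HasDerivAt.fun_sum (fun b _ => hNd b)
    have : ∀ a, HasDerivAt (fun t => s a * softmin φ (w t) a)
        (s a * ((N t a * (-φ * h a) * S t - N t a * (∑ b, N t b * (-φ * h b))) / (S t)^2)) t := by
      intro a
      have hq : HasDerivAt (fun t => N t a / S t)
          ((N t a * (-φ * h a) * S t - N t a * (∑ b, N t b * (-φ * h b))) / (S t)^2) t :=
        (hNd a).div hSd (hSpos t).ne'
      have : (fun t => N t a / S t) = fun t => softmin φ (w t) a := by
        funext t; rfl
      rw [this] at hq
      exact hq.const_mul (s a)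
    exact HasDerivAt.fun_sum (fun a _ => this a)
  -- bound on derivative
  have hbound : ∀ t : ℝ, |F' t| ≤ 2 * φ * δ := by
    intro t
    have habs : |F' t| ≤ ∑ a, |s a *
        ((N t a * (-φ * h a) * S t - N t a * (∑ b, N t b * (-φ * h b))) / (S t)^2)| := by
      rw [hF']; exact Finset.abs_sum_le_sum_abs _ _
    have hterm : ∀ a, |s a *
        ((N t a * (-φ * h a) * S t - N t a * (∑ b, N t b * (-φ * h b))) / (S t)^2)|
        ≤ softmin φ (w t) a * (2 * φ * δ) := by
      intro a
      have halg : ∀ n c T Sv : ℝ, Sv ≠ 0 →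
          (n * c * Sv - n * T) / Sv^2 = (n / Sv) * (c - T / Sv) := by
        intro n c T Sv hSv; field_simp
      have hrw : (N t a * (-φ * h a) * S t - N t a * (∑ b, N t b * (-φ * h b))) / (S t)^2
          = softmin φ (w t) a * ((-φ * h a) - (∑ b, softmin φ (w t) b * (-φ * h b))) := by
        have hsum : ∑ b, softmin φ (w t) b * (-φ * h b)
            = (∑ b, N t b * (-φ * h b)) / S t := by
          rw [Finset.sum_div]
          exact Finset.sum_congr rfl fun b _ => div_mul_eq_mul_div _ _ _
        rw [hsum]
        exact halg _ _ _ _ (hSpos t).ne'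
      have hV : |∑ b, softmin φ (w t) b * (-φ * h b)| ≤ φ * δ := by
        calc |∑ b, softmin φ (w t) b * (-φ * h b)|
            ≤ ∑ b, |softmin φ (w t) b * (-φ * h b)| := Finset.abs_sum_le_sum_abs _ _
          _ ≤ ∑ b, softmin φ (w t) b * (φ * δ) := by
              refine Finset.sum_le_sum fun b _ => ?_
              rw [abs_mul, abs_of_nonneg (softmin_nonneg _ _ _), abs_mul, abs_neg,
                abs_of_nonneg hφ]
              exact mul_le_mul_of_nonneg_left
                (mul_le_mul_of_nonneg_left (hhb b) hφ) (softmin_nonneg _ _ _)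
          _ = φ * δ := by rw [← Finset.sum_mul, softmin_sum_one, one_mul]
      have hinner : |(-φ * h a) - (∑ b, softmin φ (w t) b * (-φ * h b))| ≤ 2 * φ * δ := by
        have hb1 : |(-φ * h a)| ≤ φ * δ := by
          rw [abs_mul, abs_neg, abs_of_nonneg hφ]
          exact mul_le_mul_of_nonneg_left (hhb a) hφ
        calc |(-φ * h a) - (∑ b, softmin φ (w t) b * (-φ * h b))|
            ≤ |(-φ * h a)| + |∑ b, softmin φ (w t) b * (-φ * h b)| := abs_sub _ _
          _ ≤ φ * δ + φ * δ := add_le_add hb1 hV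
          _ = 2 * φ * δ := by ring
      rw [hrw, abs_mul, abs_mul, hs1, one_mul, abs_of_nonneg (softmin_nonneg _ _ _)]
      exact mul_le_mul_of_nonneg_left hinner (softmin_nonneg _ _ _)
    calc |F' t| ≤ ∑ a, |s a * ((N t a * (-φ * h a) * S t - N t a * (∑ b, N t b * (-φ * h b))) / (S t)^2)| := habs
      _ ≤ ∑ a, softmin φ (w t) a * (2 * φ * δ) := Finset.sum_le_sum (fun a _ => hterm a)
      _ = (∑ a, softmin φ (w t) a) * (2 * φ * δ) := by rw [← Finset.sum_mul]
      _ = 2 * φ * δ := by rw [softmin_sum_one, one_mul]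
  -- MVT
  have := norm_image_sub_le_of_norm_deriv_le_segment_01'
    (f := F) (f' := F') (C := 2 * φ * δ)
    (fun x _ => (hderiv x).hasDerivWithinAt) (fun x _ => by simpa using hbound x)
  calc F 1 - F 0 ≤ |F 1 - F 0| := le_abs_self _
    _ ≤ 2 * φ * δ := by simpa using this

end Softmin

section Helpers
variable [Fintype X] [Fintype A] [Nonempty X] [Nonempty A]

lemma le_supQ (Q : X → A → ℝ) (x : X) (a : A) : |Q x a| ≤ supQ Q :=
  Finset.le_sup' (f := fun xa : X × A => |Q xa.1 xa.2|) (Finset.mem_univ (x, a))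

lemma supQ_nonneg (Q : X → A → ℝ) : 0 ≤ supQ Q := by
  obtain ⟨x⟩ := ‹Nonempty X›; obtain ⟨a⟩ := ‹Nonempty A›
  exact le_trans (abs_nonneg _) (le_supQ Q x a)

lemma exists_supQ (Q : X → A → ℝ) : ∃ x a, supQ Q = |Q x a| := by
  obtain ⟨xa, -, hxa⟩ := Finset.exists_mem_eq_sup' Finset.univ_nonempty
    (fun xa : X × A => |Q xa.1 xa.2|)
  exact ⟨xa.1, xa.2, hxa⟩

lemma minRow_abs_le (q : A → ℝ) (M : ℝ) (h : ∀ a, |q a| ≤ M) : |minRow q| ≤ M := by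
  obtain ⟨a, -, ha⟩ := Finset.exists_mem_eq_inf' Finset.univ_nonempty q
  rw [minRow, ha]; exact h a

lemma minRow_sub_abs_le (q q' : A → ℝ) (δ : ℝ) (h : ∀ a, |q a - q' a| ≤ δ) :
    |minRow q - minRow q'| ≤ δ := by
  rw [abs_sub_le_iff]
  constructor
  · obtain ⟨a, -, ha⟩ := Finset.exists_mem_eq_inf' Finset.univ_nonempty q'
    have h1 : minRow q ≤ q a := Finset.inf'_le _ (Finset.mem_univ a)
    have h2 := (abs_le.1 (h a)).2
    have h3 : minRow q' = q' a := ha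
    linarith
  · obtain ⟨a, -, ha⟩ := Finset.exists_mem_eq_inf' Finset.univ_nonempty q
    have h1 : minRow q' ≤ q' a := Finset.inf'_le _ (Finset.mem_univ a)
    have h2 := (abs_le.1 (h a)).1
    have h3 : minRow q = q a := ha
    linarith

lemma l1_nonneg (μ : X → ℝ) : 0 ≤ l1 μ :=
  Finset.sum_nonneg fun x _ => abs_nonneg _

/-- Bound on the fixed point of the Bellman operator. -/
lemma qstar_bound (γ : ℝ) (hγ0 : 0 ≤ γ) (hγ1 : γ < 1)
    (f : X → A → (X → ℝ) → ℝ) (p : X → A → (X → ℝ) → X → ℝ) (fnorm : ℝ)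
    (μ : X → ℝ) (hμ : IsProb μ)
    (hf : ∀ x a, |f x a μ| ≤ fnorm)
    (hp0 : ∀ x a x', 0 ≤ p x a μ x')
    (hp1 : ∀ x a, ∑ x', p x a μ x' = 1)
    (Q : X → A → ℝ) (hQ : bell f p γ μ Q = Q) :
    ∀ x a, |Q x a| ≤ fnorm / (1 - γ) := by
  have h1γ : 0 < 1 - γ := by linarith
  set M := supQ Q with hM
  have hMle : M ≤ fnorm / (1 - γ) := by
    obtain ⟨x, a, hxa⟩ := exists_supQ Q
    have hb : Q x a = f x a μ + γ * ∑ x', p x a μ x' * minRow (Q x') := by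
      conv_lhs => rw [← hQ]
      rfl
    have hsum : |∑ x', p x a μ x' * minRow (Q x')| ≤ M := by
      calc |∑ x', p x a μ x' * minRow (Q x')| ≤ ∑ x', |p x a μ x' * minRow (Q x')| :=
            Finset.abs_sum_le_sum_abs _ _
        _ ≤ ∑ x', p x a μ x' * M := by
            refine Finset.sum_le_sum fun x' _ => ?_
            rw [abs_mul, abs_of_nonneg (hp0 x a x')]
            exact mul_le_mul_of_nonneg_left
              (minRow_abs_le _ _ (fun a' => le_supQ Q x' a')) (hp0 x a x')
        _ = M := by rw [← Finset.sum_mul, hp1, one_mul]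
    have hQb : |Q x a| ≤ fnorm + γ * M := by
      rw [hb]
      calc |f x a μ + γ * ∑ x', p x a μ x' * minRow (Q x')|
          ≤ |f x a μ| + |γ * ∑ x', p x a μ x' * minRow (Q x')| := abs_add_le _ _
        _ ≤ fnorm + γ * M := by
            rw [abs_mul, abs_of_nonneg hγ0]
            exact add_le_add (hf x a) (mul_le_mul_of_nonneg_left hsum hγ0)
    have hfin : M ≤ fnorm + γ * M := by
      calc M = |Q x a| := hxa
        _ ≤ fnorm + γ * M := hQb
    rw [le_div_iff₀ h1γ]; nlinarith
  intro x a
  exact le_trans (le_supQ Q x a) hMle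

end Helpers

section Helpers2
variable [Fintype X] [Fintype A] [Nonempty X] [Nonempty A]

/-- Lipschitz dependence of the Bellman fixed point on the measure. -/
lemma qstar_lip (γ : ℝ) (hγ0 : 0 ≤ γ) (hγ1 : γ < 1)
    (f : X → A → (X → ℝ) → ℝ) (p : X → A → (X → ℝ) → X → ℝ)
    (fnorm Lf Lp : ℝ) (μ μ' : X → ℝ)
    (hp0 : ∀ x a x', 0 ≤ p x a μ x')
    (hp1 : ∀ x a, ∑ x', p x a μ x' = 1)
    (hfL : ∀ x a, |f x a μ - f x a μ'| ≤ Lf * l1 (fun y => μ y - μ' y))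
    (hpL : ∀ x a, ∑ x', |p x a μ x' - p x a μ' x'| ≤ Lp * l1 (fun y => μ y - μ' y))
    (Q Q' : X → A → ℝ)
    (hQ : bell f p γ μ Q = Q) (hQ' : bell f p γ μ' Q' = Q')
    (hQ'b : ∀ x a, |Q' x a| ≤ fnorm / (1 - γ)) :
    ∀ x a, |Q x a - Q' x a|
      ≤ (Lf + (γ / (1 - γ)) * Lp * fnorm) / (1 - γ) * l1 (fun y => μ y - μ' y) := by
  have h1γ : 0 < 1 - γ := by linarith
  set d := l1 (fun y => μ y - μ' y) with hd
  set e := fnorm / (1 - γ) with he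
  have he0 : 0 ≤ e := by
    obtain ⟨x⟩ := ‹Nonempty X›; obtain ⟨a⟩ := ‹Nonempty A›
    exact le_trans (abs_nonneg _) (hQ'b x a)
  set D := supQ (fun x a => Q x a - Q' x a) with hD
  have hDle : ∀ x a, |Q x a - Q' x a| ≤ D :=
    fun x a => le_supQ (fun x a => Q x a - Q' x a) x a
  obtain ⟨x, a, hxa⟩ := exists_supQ (fun x a => Q x a - Q' x a)
  have hb : Q x a = f x a μ + γ * ∑ x', p x a μ x' * minRow (Q x') := by
    conv_lhs => rw [← hQ]
    rfl
  have hb' : Q' x a = f x a μ' + γ * ∑ x', p x a μ' x' * minRow (Q' x') := by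
    conv_lhs => rw [← hQ']
    rfl
  have hm : ∀ x', |minRow (Q x') - minRow (Q' x')| ≤ D :=
    fun x' => minRow_sub_abs_le _ _ _ (fun a' => hDle x' a')
  have hterm1 : |∑ x', p x a μ x' * (minRow (Q x') - minRow (Q' x'))| ≤ D := by
    calc |∑ x', p x a μ x' * (minRow (Q x') - minRow (Q' x'))|
        ≤ ∑ x', |p x a μ x' * (minRow (Q x') - minRow (Q' x'))| :=
          Finset.abs_sum_le_sum_abs _ _
      _ ≤ ∑ x', p x a μ x' * D := by
          refine Finset.sum_le_sum fun x' _ => ?_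
          rw [abs_mul, abs_of_nonneg (hp0 x a x')]
          exact mul_le_mul_of_nonneg_left (hm x') (hp0 x a x')
      _ = D := by rw [← Finset.sum_mul, hp1, one_mul]
  have hterm2 : |∑ x', (p x a μ x' - p x a μ' x') * minRow (Q' x')| ≤ Lp * d * e := by
    calc |∑ x', (p x a μ x' - p x a μ' x') * minRow (Q' x')|
        ≤ ∑ x', |(p x a μ x' - p x a μ' x') * minRow (Q' x')| :=
          Finset.abs_sum_le_sum_abs _ _
      _ ≤ ∑ x', |p x a μ x' - p x a μ' x'| * e := by
          refine Finset.sum_le_sum fun x' _ => ?_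
          rw [abs_mul]
          exact mul_le_mul_of_nonneg_left
            (minRow_abs_le _ _ (fun a' => hQ'b x' a')) (abs_nonneg _)
      _ = (∑ x', |p x a μ x' - p x a μ' x'|) * e := by rw [Finset.sum_mul]
      _ ≤ Lp * d * e := mul_le_mul_of_nonneg_right (hpL x a) he0
  have hsplit : ∑ x', p x a μ x' * minRow (Q x') - ∑ x', p x a μ' x' * minRow (Q' x')
      = (∑ x', p x a μ x' * (minRow (Q x') - minRow (Q' x')))
        + ∑ x', (p x a μ x' - p x a μ' x') * minRow (Q' x') := by
    rw [← Finset.sum_add_distrib, ← Finset.sum_sub_distrib]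
    refine Finset.sum_congr rfl fun x' _ => by ring
  have hkey : D ≤ Lf * d + γ * (D + Lp * d * e) := by
    calc D = |Q x a - Q' x a| := hxa
      _ = |(f x a μ - f x a μ') + γ * ((∑ x', p x a μ x' * (minRow (Q x') - minRow (Q' x')))
            + ∑ x', (p x a μ x' - p x a μ' x') * minRow (Q' x'))| := by
          rw [hb, hb', ← hsplit]; ring_nf
      _ ≤ |f x a μ - f x a μ'| + γ * |(∑ x', p x a μ x' * (minRow (Q x') - minRow (Q' x')))
            + ∑ x', (p x a μ x' - p x a μ' x') * minRow (Q' x')| := by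
          refine le_trans (abs_add_le _ _) ?_
          rw [abs_mul, abs_of_nonneg hγ0]
      _ ≤ Lf * d + γ * (D + Lp * d * e) := by
          refine add_le_add (hfL x a) (mul_le_mul_of_nonneg_left ?_ hγ0)
          exact le_trans (abs_add_le _ _) (add_le_add hterm1 hterm2)
  have hC : (Lf + (γ / (1 - γ)) * Lp * fnorm) = Lf + γ * Lp * e := by
    rw [he]; ring
  intro x' a'
  refine le_trans (hDle x' a') ?_
  rw [hC, div_mul_eq_mul_div, le_div_iff₀ h1γ]
  nlinarith
end Helpers2


section Helpers3
variable [Fintype X] [Fintype A] [Nonempty X] [Nonempty A]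

lemma softmin_l1_lipschitz_card (φ : ℝ) (hφ : 0 ≤ φ) (z z' : A → ℝ) (δ : ℝ) (hδ : 0 ≤ δ)
    (hzz : ∀ a, |z a - z' a| ≤ δ) :
    ∑ a, |softmin φ z a - softmin φ z' a| ≤ φ * (Fintype.card A : ℝ) * δ := by
  by_cases hA : 2 ≤ Fintype.card A
  · refine le_trans (softmin_l1_lipschitz φ hφ z z' δ hδ hzz) ?_
    have h2 : (2 : ℝ) ≤ (Fintype.card A : ℝ) := by exact_mod_cast hA
    nlinarith [mul_nonneg hφ hδ]
  · have h1 : Fintype.card A = 1 := by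
      have := Fintype.card_pos (α := A); omega
    obtain ⟨a₀, ha₀⟩ := Fintype.card_eq_one_iff.1 h1
    have huniv : (Finset.univ : Finset A) = {a₀} := by
      ext a; simp [ha₀ a]
    have hone : ∀ w : A → ℝ, ∀ a, softmin φ w a = 1 := by
      intro w a
      unfold softmin
      rw [huniv, Finset.sum_singleton, ha₀ a, div_self (Real.exp_pos _).ne']
    rw [huniv, Finset.sum_singleton, hone, hone, sub_self, abs_zero]
    positivity

/-- Contraction for a minorized kernel applied to a zero-sum signed vector. -/
lemma kernel_contraction (K : X → X → ℝ) (cmin : ℝ)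
    (hK : ∀ x' x, cmin ≤ K x' x) (hK1 : ∀ x', ∑ x, K x' x = 1)
    (ν : X → ℝ) (hν : ∑ x', ν x' = 0) :
    ∑ x, |∑ x', ν x' * K x' x| ≤ (1 - (Fintype.card X : ℝ) * cmin) * ∑ x', |ν x'| := by
  have hkey : ∀ x, |∑ x', ν x' * K x' x| ≤ ∑ x', |ν x'| * (K x' x - cmin) := by
    intro x
    have : ∑ x', ν x' * K x' x = ∑ x', ν x' * (K x' x - cmin) := by
      rw [← sub_eq_zero, ← Finset.sum_sub_distrib]
      have : ∀ x' ∈ Finset.univ, ν x' * K x' x - ν x' * (K x' x - cmin) = ν x' * cmin := by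
        intro x' _; ring
      rw [Finset.sum_congr rfl this, ← Finset.sum_mul, hν, zero_mul]
    rw [this]
    refine le_trans (Finset.abs_sum_le_sum_abs _ _) (Finset.sum_le_sum fun x' _ => ?_)
    rw [abs_mul, abs_of_nonneg (show (0:ℝ) ≤ K x' x - cmin by linarith [hK x' x])]
  calc ∑ x, |∑ x', ν x' * K x' x| ≤ ∑ x, ∑ x', |ν x'| * (K x' x - cmin) :=
        Finset.sum_le_sum fun x _ => hkey x
    _ = ∑ x', |ν x'| * (1 - (Fintype.card X : ℝ) * cmin) := by
        rw [Finset.sum_comm]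
        refine Finset.sum_congr rfl fun x' _ => ?_
        rw [← Finset.mul_sum]
        congr 1
        rw [Finset.sum_sub_distrib, hK1, Finset.sum_const, Finset.card_univ, nsmul_eq_mul]
    _ = (1 - (Fintype.card X : ℝ) * cmin) * ∑ x', |ν x'| := by
        rw [← Finset.sum_mul, mul_comm]

end Helpers3


/-- The main Lipschitz estimate for G(μ) = P^{softmin_φ Q*_μ, μ} μ. -/
lemma G_lip [Fintype X] [Fintype A] [Nonempty X] [Nonempty A]
    (γ : ℝ) (hγ0 : 0 < γ) (hγ1 : γ < 1)
    (f : X → A → (X → ℝ) → ℝ) (fnorm : ℝ)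
    (hf : ∀ x a μ, IsProb μ → |f x a μ| ≤ fnorm)
    (p : X → A → (X → ℝ) → X → ℝ)
    (hp0 : ∀ x a μ x', IsProb μ → 0 ≤ p x a μ x')
    (hp1 : ∀ x a μ, IsProb μ → ∑ x', p x a μ x' = 1)
    (cmin Lf Lp : ℝ)
    (hcmin : ∀ x a μ x', IsProb μ → cmin ≤ p x a μ x')
    (hLf0 : 0 ≤ Lf) (hLp0 : 0 ≤ Lp)
    (hLf : ∀ x a μ μ', IsProb μ → IsProb μ' →
      |f x a μ - f x a μ'| ≤ Lf * l1 (fun y => μ y - μ' y))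
    (hLp : ∀ x a μ μ', IsProb μ → IsProb μ' →
      ∑ x', |p x a μ x' - p x a μ' x'| ≤ Lp * l1 (fun y => μ y - μ' y))
    (φ : ℝ) (hφ0 : 0 < φ)
    (Qstar : (X → ℝ) → X → A → ℝ)
    (hQstar : ∀ μ, IsProb μ → bell f p γ μ (Qstar μ) = Qstar μ)
    (μ μ' : X → ℝ) (hμ : IsProb μ) (hμ' : IsProb μ') :
    l1 (fun x => Ppush p (fun x' => softmin φ (Qstar μ x')) μ μ x
          - Ppush p (fun x' => softmin φ (Qstar μ' x')) μ' μ' x)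
      ≤ (φ * (Fintype.card A : ℝ) * (Lf + (γ / (1 - γ)) * Lp * fnorm) / (1 - γ)
          + Lp + 1 - (Fintype.card X : ℝ) * cmin) * l1 (fun x => μ x - μ' x) := by
  have h1γ : 0 < 1 - γ := by linarith
  obtain ⟨x₀⟩ := ‹Nonempty X›; obtain ⟨a₀⟩ := ‹Nonempty A›
  have hfnorm0 : 0 ≤ fnorm := le_trans (abs_nonneg _) (hf x₀ a₀ μ hμ)
  set d := l1 (fun y => μ y - μ' y) with hd
  have hd0 : 0 ≤ d := l1_nonneg _
  set C := Lf + (γ / (1 - γ)) * Lp * fnorm with hC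
  have hC0 : 0 ≤ C :=
    add_nonneg hLf0 (mul_nonneg (mul_nonneg (div_nonneg hγ0.le h1γ.le) hLp0) hfnorm0)
  set Q := Qstar μ with hQdef
  set Q' := Qstar μ' with hQ'def
  set π : X → A → ℝ := fun x' => softmin φ (Q x') with hπ
  set π' : X → A → ℝ := fun x' => softmin φ (Q' x') with hπ'
  have πnn : ∀ x' a, 0 ≤ π x' a := fun x' a => softmin_nonneg φ (Q x') a
  have π'nn : ∀ x' a, 0 ≤ π' x' a := fun x' a => softmin_nonneg φ (Q' x') a
  have πsum : ∀ x', ∑ a, π x' a = 1 := fun x' => softmin_sum_one φ (Q x')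
  -- the Q-star Lipschitz bound
  have hQlip : ∀ x a, |Q x a - Q' x a| ≤ C / (1 - γ) * d :=
    qstar_lip γ hγ0.le hγ1 f p fnorm Lf Lp μ μ'
      (fun x a x' => hp0 x a μ x' hμ) (fun x a => hp1 x a μ hμ)
      (fun x a => hLf x a μ μ' hμ hμ') (fun x a => hLp x a μ μ' hμ hμ')
      Q Q' (hQstar μ hμ) (hQstar μ' hμ')
      (qstar_bound γ hγ0.le hγ1 f p fnorm μ' hμ' (fun x a => hf x a μ' hμ')
        (fun x a x' => hp0 x a μ' x' hμ') (fun x a => hp1 x a μ' hμ') Q' (hQstar μ' hμ'))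
  have hδ0 : 0 ≤ C / (1 - γ) * d := mul_nonneg (div_nonneg hC0 h1γ.le) hd0
  have hπd : ∀ x', ∑ a, |π x' a - π' x' a| ≤ φ * (Fintype.card A : ℝ) * (C / (1 - γ) * d) :=
    fun x' => softmin_l1_lipschitz_card φ hφ0.le (Q x') (Q' x') _ hδ0 (fun a => hQlip x' a)
  -- the kernel
  set K : X → X → ℝ := fun x' x => ∑ a, π x' a * p x' a μ x with hK
  have hKc : ∀ x' x, cmin ≤ K x' x := by
    intro x' x
    have : cmin = ∑ a, π x' a * cmin := by rw [← Finset.sum_mul, πsum, one_mul]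
    rw [this]
    exact Finset.sum_le_sum fun a _ =>
      mul_le_mul_of_nonneg_left (hcmin x' a μ x hμ) (πnn x' a)
  have hK1 : ∀ x', ∑ x, K x' x = 1 := by
    intro x'
    rw [hK]
    rw [Finset.sum_comm]
    have : ∀ a, ∑ x, π x' a * p x' a μ x = π x' a := by
      intro a; rw [← Finset.mul_sum, hp1 x' a μ hμ, mul_one]
    rw [Finset.sum_congr rfl fun a _ => this a, πsum]
  -- Term A
  have hA : ∑ x, |Ppush p π μ μ x - Ppush p π μ μ' x|
      ≤ (1 - (Fintype.card X : ℝ) * cmin) * d := by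
    have hpt : ∀ x, Ppush p π μ μ x - Ppush p π μ μ' x
        = ∑ x', (μ x' - μ' x') * K x' x := by
      intro x
      unfold Ppush
      rw [← Finset.sum_sub_distrib]
      exact Finset.sum_congr rfl fun x' _ => by rw [sub_mul]
    have hν : ∑ x', (μ x' - μ' x') = 0 := by
      rw [Finset.sum_sub_distrib, hμ.2, hμ'.2, sub_self]
    calc ∑ x, |Ppush p π μ μ x - Ppush p π μ μ' x|
        = ∑ x, |∑ x', (μ x' - μ' x') * K x' x| := by
          exact Finset.sum_congr rfl fun x _ => by rw [hpt x]
      _ ≤ (1 - (Fintype.card X : ℝ) * cmin) * ∑ x', |μ x' - μ' x'| :=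
          kernel_contraction K cmin hKc hK1 _ hν
      _ = (1 - (Fintype.card X : ℝ) * cmin) * d := rfl
  -- Term B
  have hB : ∑ x, |Ppush p π μ μ' x - Ppush p π μ' μ' x| ≤ Lp * d := by
    have hpt : ∀ x, |Ppush p π μ μ' x - Ppush p π μ' μ' x|
        ≤ ∑ x', μ' x' * ∑ a, π x' a * |p x' a μ x - p x' a μ' x| := by
      intro x
      have heq : Ppush p π μ μ' x - Ppush p π μ' μ' x
          = ∑ x', μ' x' * ∑ a, π x' a * (p x' a μ x - p x' a μ' x) := by
        unfold Ppush
        rw [← Finset.sum_sub_distrib]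
        refine Finset.sum_congr rfl fun x' _ => ?_
        rw [← mul_sub, ← Finset.sum_sub_distrib]
        congr 1
        exact Finset.sum_congr rfl fun a _ => by ring
      rw [heq]
      refine le_trans (Finset.abs_sum_le_sum_abs _ _) (Finset.sum_le_sum fun x' _ => ?_)
      rw [abs_mul, abs_of_nonneg (hμ'.1 x')]
      refine mul_le_mul_of_nonneg_left ?_ (hμ'.1 x')
      refine le_trans (Finset.abs_sum_le_sum_abs _ _) (Finset.sum_le_sum fun a _ => ?_)
      rw [abs_mul, abs_of_nonneg (πnn x' a)]
    calc ∑ x, |Ppush p π μ μ' x - Ppush p π μ' μ' x|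
        ≤ ∑ x, ∑ x', μ' x' * ∑ a, π x' a * |p x' a μ x - p x' a μ' x| :=
          Finset.sum_le_sum fun x _ => hpt x
      _ = ∑ x', μ' x' * ∑ a, π x' a * ∑ x, |p x' a μ x - p x' a μ' x| := by
          rw [Finset.sum_comm]
          refine Finset.sum_congr rfl fun x' _ => ?_
          rw [← Finset.mul_sum]
          congr 1
          rw [Finset.sum_comm]
          exact Finset.sum_congr rfl fun a _ => (Finset.mul_sum _ _ _).symm
      _ ≤ ∑ x', μ' x' * ∑ a, π x' a * (Lp * d) := by
          refine Finset.sum_le_sum fun x' _ => mul_le_mul_of_nonneg_left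
            (Finset.sum_le_sum fun a _ => mul_le_mul_of_nonneg_left
              (hLp x' a μ μ' hμ hμ') (πnn x' a)) (hμ'.1 x')
      _ = Lp * d := by
          have : ∀ x' : X, ∑ a, π x' a * (Lp * d) = Lp * d := fun x' => by
            rw [← Finset.sum_mul, πsum, one_mul]
          rw [Finset.sum_congr rfl fun x' _ => by rw [this x']]
          rw [← Finset.sum_mul, hμ'.2, one_mul]
  -- Term C
  have hCterm : ∑ x, |Ppush p π μ' μ' x - Ppush p π' μ' μ' x|
      ≤ φ * (Fintype.card A : ℝ) * (C / (1 - γ) * d) := by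
    have hpt : ∀ x, |Ppush p π μ' μ' x - Ppush p π' μ' μ' x|
        ≤ ∑ x', μ' x' * ∑ a, |π x' a - π' x' a| * p x' a μ' x := by
      intro x
      have heq : Ppush p π μ' μ' x - Ppush p π' μ' μ' x
          = ∑ x', μ' x' * ∑ a, (π x' a - π' x' a) * p x' a μ' x := by
        unfold Ppush
        rw [← Finset.sum_sub_distrib]
        refine Finset.sum_congr rfl fun x' _ => ?_
        rw [← mul_sub, ← Finset.sum_sub_distrib]
        congr 1
        exact Finset.sum_congr rfl fun a _ => by ring
      rw [heq]
      refine le_trans (Finset.abs_sum_le_sum_abs _ _) (Finset.sum_le_sum fun x' _ => ?_)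
      rw [abs_mul, abs_of_nonneg (hμ'.1 x')]
      refine mul_le_mul_of_nonneg_left ?_ (hμ'.1 x')
      refine le_trans (Finset.abs_sum_le_sum_abs _ _) (Finset.sum_le_sum fun a _ => ?_)
      rw [abs_mul, abs_of_nonneg (hp0 x' a μ' x hμ')]
    calc ∑ x, |Ppush p π μ' μ' x - Ppush p π' μ' μ' x|
        ≤ ∑ x, ∑ x', μ' x' * ∑ a, |π x' a - π' x' a| * p x' a μ' x :=
          Finset.sum_le_sum fun x _ => hpt x
      _ = ∑ x', μ' x' * ∑ a, |π x' a - π' x' a| * ∑ x, p x' a μ' x := by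
          rw [Finset.sum_comm]
          refine Finset.sum_congr rfl fun x' _ => ?_
          rw [← Finset.mul_sum]
          congr 1
          rw [Finset.sum_comm]
          exact Finset.sum_congr rfl fun a _ => (Finset.mul_sum _ _ _).symm
      _ = ∑ x', μ' x' * ∑ a, |π x' a - π' x' a| := by
          refine Finset.sum_congr rfl fun x' _ => ?_
          congr 1
          refine Finset.sum_congr rfl fun a _ => ?_
          rw [hp1 x' a μ' hμ', mul_one]
      _ ≤ ∑ x', μ' x' * (φ * (Fintype.card A : ℝ) * (C / (1 - γ) * d)) :=
          Finset.sum_le_sum fun x' _ =>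
            mul_le_mul_of_nonneg_left (hπd x') (hμ'.1 x')
      _ = φ * (Fintype.card A : ℝ) * (C / (1 - γ) * d) := by
          rw [← Finset.sum_mul, hμ'.2, one_mul]
  -- assemble
  calc l1 (fun x => Ppush p π μ μ x - Ppush p π' μ' μ' x)
      = ∑ x, |(Ppush p π μ μ x - Ppush p π μ μ' x) + (Ppush p π μ μ' x - Ppush p π μ' μ' x)
          + (Ppush p π μ' μ' x - Ppush p π' μ' μ' x)| := by
        refine Finset.sum_congr rfl fun x _ => ?_
        congr 1
        ring
    _ ≤ ∑ x, (|Ppush p π μ μ x - Ppush p π μ μ' x| + |Ppush p π μ μ' x - Ppush p π μ' μ' x|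
          + |Ppush p π μ' μ' x - Ppush p π' μ' μ' x|) := by
        refine Finset.sum_le_sum fun x _ => ?_
        exact le_trans (abs_add_le _ _) (add_le_add_left (abs_add_le _ _) _)
    _ = (∑ x, |Ppush p π μ μ x - Ppush p π μ μ' x|)
          + (∑ x, |Ppush p π μ μ' x - Ppush p π μ' μ' x|)
          + (∑ x, |Ppush p π μ' μ' x - Ppush p π' μ' μ' x|) := by
        rw [Finset.sum_add_distrib, Finset.sum_add_distrib]
    _ ≤ (1 - (Fintype.card X : ℝ) * cmin) * d + Lp * d
          + φ * (Fintype.card A : ℝ) * (C / (1 - γ) * d) :=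
        add_le_add (add_le_add hA hB) hCterm
    _ = (φ * (Fintype.card A : ℝ) * C / (1 - γ) + Lp + 1 - (Fintype.card X : ℝ) * cmin) * d := by
        ring


lemma isProb_uniform [Fintype X] [Nonempty X] :
    IsProb (fun _ : X => ((Fintype.card X : ℝ))⁻¹) := by
  have hcard : 0 < (Fintype.card X : ℝ) := by
    exact_mod_cast Fintype.card_pos
  constructor
  · intro x; positivity
  · rw [Finset.sum_const, Finset.card_univ, nsmul_eq_mul, mul_inv_cancel₀ hcard.ne']

lemma Ppush_isProb [Fintype X] [Fintype A] (p : X → A → (X → ℝ) → X → ℝ)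
    (π : X → A → ℝ) (hπ0 : ∀ x a, 0 ≤ π x a) (hπ1 : ∀ x, ∑ a, π x a = 1)
    (μ : X → ℝ) (hμ : IsProb μ)
    (hp0 : ∀ x a x', 0 ≤ p x a μ x') (hp1 : ∀ x a, ∑ x', p x a μ x' = 1) :
    IsProb (fun x => Ppush p π μ μ x) := by
  constructor
  · intro x
    refine Finset.sum_nonneg fun x' _ => mul_nonneg (hμ.1 x') ?_
    exact Finset.sum_nonneg fun a _ => mul_nonneg (hπ0 x' a) (hp0 x' a x)
  · unfold Ppush
    rw [Finset.sum_comm]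
    have hrow : ∀ x', ∑ x, μ x' * ∑ a, π x' a * p x' a μ x = μ x' := by
      intro x'
      rw [← Finset.mul_sum]
      have : ∑ x, ∑ a, π x' a * p x' a μ x = 1 := by
        rw [Finset.sum_comm]
        have h1 : ∀ a, ∑ x, π x' a * p x' a μ x = π x' a := fun a => by
          rw [← Finset.mul_sum, hp1 x' a, mul_one]
        rw [Finset.sum_congr rfl fun a _ => h1 a, hπ1]
      rw [this, mul_one]
    rw [Finset.sum_congr rfl fun x' _ => hrow x', hμ.2]


set_option maxHeartbeats 2000000 in
/-- the map G(μ) = P^{softmin_φ Q*_μ, μ} μ is a strict contraction with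
constant k = φ|𝒜|(L_f + (γ/(1−γ))L_p‖f‖∞)/(1−γ) + L_p + 1 − |𝒳|c_min < 1, hence has a
unique fixed point μ*φ in the simplex. -/
theorem mfg_map_contraction [Fintype X] [Fintype A] [Nonempty X] [Nonempty A]
    (γ : ℝ) (hγ0 : 0 < γ) (hγ1 : γ < 1)
    (f : X → A → (X → ℝ) → ℝ) (fnorm : ℝ)
    (hf : ∀ x a μ, IsProb μ → |f x a μ| ≤ fnorm)
    (p : X → A → (X → ℝ) → X → ℝ)
    (hp0 : ∀ x a μ x', IsProb μ → 0 ≤ p x a μ x')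
    (hp1 : ∀ x a μ, IsProb μ → ∑ x', p x a μ x' = 1)
    (cmin Lf Lp : ℝ) (hcmin0 : 0 ≤ cmin)
    (hcmin : ∀ x a μ x', IsProb μ → cmin ≤ p x a μ x')
    (hLf0 : 0 ≤ Lf) (hLp0 : 0 ≤ Lp)
    (hLf : ∀ x a μ μ', IsProb μ → IsProb μ' →
      |f x a μ - f x a μ'| ≤ Lf * l1 (fun y => μ y - μ' y))
    (hLp : ∀ x a μ μ', IsProb μ → IsProb μ' →
      ∑ x', |p x a μ x' - p x a μ' x'| ≤ Lp * l1 (fun y => μ y - μ' y))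
    (hLpc : Lp < (Fintype.card X : ℝ) * cmin)
    (φ : ℝ) (hφ0 : 0 < φ)
    (hφmax : φ < ((Fintype.card X : ℝ) * cmin - Lp) / (Fintype.card A : ℝ)
        * ((1 - γ) / (Lf + (γ / (1 - γ)) * Lp * fnorm)))
    (Qstar : (X → ℝ) → X → A → ℝ)
    (hQstar : ∀ μ, IsProb μ → bell f p γ μ (Qstar μ) = Qstar μ) :
    (∀ μ μ' : X → ℝ, IsProb μ → IsProb μ' →
        l1 (fun x => Ppush p (fun x' => softmin φ (Qstar μ x')) μ μ x
              - Ppush p (fun x' => softmin φ (Qstar μ' x')) μ' μ' x)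
          ≤ (φ * (Fintype.card A : ℝ) * (Lf + (γ / (1 - γ)) * Lp * fnorm) / (1 - γ)
              + Lp + 1 - (Fintype.card X : ℝ) * cmin) * l1 (fun x => μ x - μ' x))
    ∧ (φ * (Fintype.card A : ℝ) * (Lf + (γ / (1 - γ)) * Lp * fnorm) / (1 - γ)
        + Lp + 1 - (Fintype.card X : ℝ) * cmin) < 1
    ∧ (∃! μs : X → ℝ, IsProb μs ∧
        Ppush p (fun x' => softmin φ (Qstar μs x')) μs μs = μs) := by
  classical
  have h1γ : 0 < 1 - γ := by linarith
  obtain ⟨x₀⟩ := ‹Nonempty X›; obtain ⟨a₀⟩ := ‹Nonempty A›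
  have hcardX : 0 < (Fintype.card X : ℝ) := by exact_mod_cast Fintype.card_pos
  have hcardA : 0 < (Fintype.card A : ℝ) := by exact_mod_cast Fintype.card_pos
  have hμ₀ : IsProb (fun _ : X => ((Fintype.card X : ℝ))⁻¹) := isProb_uniform
  have hfnorm0 : 0 ≤ fnorm := le_trans (abs_nonneg _) (hf x₀ a₀ _ hμ₀)
  set C := Lf + (γ / (1 - γ)) * Lp * fnorm with hCdef
  have hC0 : 0 ≤ C :=
    add_nonneg hLf0 (mul_nonneg (mul_nonneg (div_nonneg hγ0.le h1γ.le) hLp0) hfnorm0)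
  have hCpos : 0 < C := by
    rcases hC0.lt_or_eq with h | h
    · exact h
    · exfalso
      rw [← h, div_zero, mul_zero] at hφmax
      linarith
  have hncmin1 : (Fintype.card X : ℝ) * cmin ≤ 1 := by
    have : (Fintype.card X : ℝ) * cmin = ∑ _x : X, cmin := by
      rw [Finset.sum_const, Finset.card_univ, nsmul_eq_mul]
    rw [this, ← hp1 x₀ a₀ _ hμ₀]
    exact Finset.sum_le_sum fun x _ => hcmin x₀ a₀ _ x hμ₀
  set k := φ * (Fintype.card A : ℝ) * C / (1 - γ) + Lp + 1 - (Fintype.card X : ℝ) * cmin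
    with hkdef
  have hk0 : 0 ≤ k := by
    have h1 : 0 ≤ φ * (Fintype.card A : ℝ) * C / (1 - γ) := by positivity
    rw [hkdef]; linarith
  have hk1 : k < 1 := by
    have ht : 0 < (Fintype.card A : ℝ) * C / (1 - γ) := by positivity
    have h2 := mul_lt_mul_of_pos_right hφmax ht
    have h3 : ((Fintype.card X : ℝ) * cmin - Lp) / (Fintype.card A : ℝ) * ((1 - γ) / C)
        * ((Fintype.card A : ℝ) * C / (1 - γ)) = (Fintype.card X : ℝ) * cmin - Lp := by
      field_simp
    have h4 : φ * ((Fintype.card A : ℝ) * C / (1 - γ))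
        = φ * (Fintype.card A : ℝ) * C / (1 - γ) := by ring
    rw [h3, h4] at h2
    rw [hkdef]; linarith
  have part1 : ∀ μ μ' : X → ℝ, IsProb μ → IsProb μ' →
      l1 (fun x => Ppush p (fun x' => softmin φ (Qstar μ x')) μ μ x
            - Ppush p (fun x' => softmin φ (Qstar μ' x')) μ' μ' x)
        ≤ k * l1 (fun x => μ x - μ' x) := by
    intro μ μ' hμ hμ'
    exact G_lip γ hγ0 hγ1 f fnorm hf p hp0 hp1 cmin Lf Lp hcmin hLf0 hLp0 hLf hLp φ hφ0
      Qstar hQstar μ μ' hμ hμ'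
  refine ⟨part1, hk1, ?_⟩
  -- Banach fixed point on the simplex inside PiLp 1
  set E := PiLp 1 (fun _ : X => ℝ) with hE
  have hdistE : ∀ μ ν : E, dist μ ν = l1 (fun x => μ x - ν x) := by
    intro μ ν
    rw [PiLp.dist_eq_sum (p := 1) (by norm_num)]
    simp [l1, Real.dist_eq]
  set Sset : Set E := {μ : E | IsProb (fun x => μ x)} with hSset
  have hSclosed : IsClosed Sset := by
    have h1 : IsClosed {μ : E | ∀ x, 0 ≤ μ x} := by
      have : {μ : E | ∀ x, 0 ≤ μ x} = ⋂ x, {μ : E | 0 ≤ μ x} := by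
        ext μ; simp
      rw [this]
      refine isClosed_iInter fun x => ?_
      have hc : Continuous fun μ : E => μ x := by
        exact (continuous_apply x).comp (PiLp.continuous_ofLp 1 (fun _ : X => ℝ))
      exact isClosed_le continuous_const hc
    have h2 : IsClosed {μ : E | ∑ x, μ x = 1} := by
      have hc : Continuous fun μ : E => ∑ x, μ x := by
        refine continuous_finset_sum _ fun x _ => ?_
        exact (continuous_apply x).comp (PiLp.continuous_ofLp 1 (fun _ : X => ℝ))
      exact isClosed_eq hc continuous_const
    have : Sset = {μ : E | ∀ x, 0 ≤ μ x} ∩ {μ : E | ∑ x, μ x = 1} := by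
      ext μ; exact ⟨fun h => ⟨h.1, h.2⟩, fun h => ⟨h.1, h.2⟩⟩
    rw [this]
    exact h1.inter h2
  haveI : CompleteSpace Sset := hSclosed.completeSpace_coe
  haveI : Nonempty Sset := ⟨⟨WithLp.toLp 1 (fun _ : X => ((Fintype.card X : ℝ))⁻¹ : X → ℝ), hμ₀⟩⟩
  have GP : ∀ ν : X → ℝ, IsProb ν →
      IsProb (fun x => Ppush p (fun x' => softmin φ (Qstar ν x')) ν ν x) := fun ν hν =>
    Ppush_isProb p (fun x' => softmin φ (Qstar ν x'))
      (fun x' a => softmin_nonneg φ (Qstar ν x') a)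
      (fun x' => softmin_sum_one φ (Qstar ν x'))
      ν hν (fun x a x' => hp0 x a ν x' hν) (fun x a => hp1 x a ν hν)
  let G : Sset → Sset := fun μ =>
    ⟨WithLp.toLp 1 (fun x => Ppush p (fun x' => softmin φ (Qstar μ.1 x')) μ.1 μ.1 x : X → ℝ),
      GP μ.1 μ.2⟩
  set K : NNReal := ⟨k, hk0⟩ with hK
  have hGlip : LipschitzWith K G := by
    refine LipschitzWith.of_dist_le_mul fun μ ν => ?_
    rw [Subtype.dist_eq, Subtype.dist_eq, hdistE, hdistE]
    exact part1 μ.1 ν.1 μ.2 ν.2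
  have hKlt : K < 1 := by
    rw [← NNReal.coe_lt_coe]; exact hk1
  have hCW : ContractingWith K G := ⟨hKlt, hGlip⟩
  set μfix := ContractingWith.fixedPoint G hCW with hμfixdef
  have hfixpt : G μfix = μfix := ContractingWith.fixedPoint_isFixedPt hCW
  have hfixeq : Ppush p (fun x' => softmin φ (Qstar μfix.1 x')) μfix.1 μfix.1 = μfix.1 := by
    have := congrArg (fun v : Sset => WithLp.ofLp v.1) hfixpt
    exact this
  refine ⟨μfix.1, ⟨μfix.2, hfixeq⟩, ?_⟩
  rintro ν ⟨hνP, hνfix⟩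
  have hle := part1 ν μfix.1 hνP μfix.2
  have heq : l1 (fun x => Ppush p (fun x' => softmin φ (Qstar ν x')) ν ν x
      - Ppush p (fun x' => softmin φ (Qstar μfix.1 x')) μfix.1 μfix.1 x)
      = l1 (fun x => ν x - μfix.1 x) := by
    congr 1
    funext x
    rw [congrFun hνfix x, congrFun hfixeq x]
  rw [heq] at hle
  have hd0 : 0 ≤ l1 (fun x => ν x - μfix.1 x) := l1_nonneg _
  have hdz : l1 (fun x => ν x - μfix.1 x) = 0 := by nlinarith
  have hall := (Finset.sum_eq_zero_iff_of_nonneg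
    (fun x _ => abs_nonneg (ν x - μfix.1 x))).1 hdz
  funext x
  have := hall x (Finset.mem_univ x)
  rw [abs_eq_zero, sub_eq_zero] at this
  exact this
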